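/- For disjoint subsets I, J with I ∪ J = {1, …, r} and any dominant weight λ, the vertex v_{I,J}(λ) equals the average (1/|W_I|) Σ_{w ∈ W_I} wλ over the parabolic Weyl subgroup W_I. -/

import Mathlib

/-- For disjoint subsets `I, J` with `I ∪ J = {1, …, r}` and any dominant
weight `lam`, the vertex `v_{I,J}(lam)` (i.e. the point `v` with `⟨v, α_i^∨⟩ = 0` for
`i ∈ I` and `⟨lam − v, x_j⟩ = 0` for `j ∈ J`) equals the average
`(1/|W_I|) Σ_{w ∈ W_I} w(lam)` over the parabolic Weyl subgroup `W_I`, the subgroup of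
linear automorphisms of `V` generated by the simple reflections `s_i`, `i ∈ I`. -/
theorem stmt_5 {V : Type*} [AddCommGroup V] [Module ℚ V] {r : ℕ}
    (b : Module.Basis (Fin r) ℚ V) (coroot : Fin r → Module.Dual ℚ V)
    (hdiag : ∀ i, coroot i (b i) = 2)
    (hoff : ∀ i j : Fin r, i ≠ j → coroot j (b i) ≤ 0)
    (hint : ∀ i j : Fin r, ∃ n : ℤ, coroot j (b i) = (n : ℚ))
    (Φ : Set V) (hΦfin : Φ.Finite) (hΦroot : ∀ i, b i ∈ Φ)
    (hΦrefl : ∀ β ∈ Φ, ∀ i, β - coroot i β • b i ∈ Φ)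
    (x : Fin r → Module.Dual ℚ V)
    (hx : ∀ i j : Fin r, x j (b i) = if i = j then 1 else 0)
    (I J : Finset (Fin r)) (hdisj : Disjoint I J) (hcover : I ∪ J = Finset.univ)
    (lam : V) (hlam : ∀ i, 0 ≤ coroot i lam)
    (v : V) (hv1 : ∀ i ∈ I, coroot i v = 0) (hv2 : ∀ j ∈ J, x j (lam - v) = 0)
    (W : Subgroup (V ≃ₗ[ℚ] V))
    (hW : W = Subgroup.closure
      {g : V ≃ₗ[ℚ] V | ∃ i ∈ I, ∀ u : V, g u = u - coroot i u • b i})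
    (hWfin : (W : Set (V ≃ₗ[ℚ] V)).Finite) :
    v = (hWfin.toFinset.card : ℚ)⁻¹ • ∑ w ∈ hWfin.toFinset, w lam := by
  classical
  set F : Finset (V ≃ₗ[ℚ] V) := hWfin.toFinset with hF
  have hmemF : ∀ g : V ≃ₗ[ℚ] V, g ∈ F ↔ g ∈ W := by
    intro g; simp [hF]
  have h1F : (1 : V ≃ₗ[ℚ] V) ∈ F := (hmemF 1).2 W.one_mem
  have hcardpos : 0 < F.card := Finset.card_pos.2 ⟨1, h1F⟩
  have hcardne : ((F.card : ℚ)) ≠ 0 := by positivity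
  -- the simple reflections, for i ∈ I
  have hrefl : ∀ i ∈ I, ∃ g : V ≃ₗ[ℚ] V, g ∈ W ∧ ∀ u : V, g u = u - coroot i u • b i := by
    intro i hi
    set s : V →ₗ[ℚ] V := LinearMap.id - (coroot i).smulRight (b i) with hs
    have hsu : ∀ u : V, s u = u - coroot i u • b i := by
      intro u; simp [hs]
    have hinv : ∀ u : V, s (s u) = u := by
      intro u
      have hc : coroot i (s u) = -(coroot i u) := by
        rw [hsu, map_sub, map_smul, hdiag i, smul_eq_mul]; ring
      rw [hsu (s u), hc, hsu u]
      module
    refine ⟨LinearEquiv.ofLinear s s (by ext u; simpa using hinv u)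
      (by ext u; simpa using hinv u), ?_, ?_⟩
    · rw [hW]
      exact Subgroup.subset_closure ⟨i, hi, fun u => hsu u⟩
    · exact hsu
  -- elements of W move vectors by elements of the span of the b i, i ∈ I
  set M : Submodule ℚ V := Submodule.span ℚ (b '' (I : Set (Fin r))) with hM
  have hmove : ∀ w ∈ W, ∀ u : V, u - w u ∈ M := by
    intro w hw
    rw [hW] at hw
    induction hw using Subgroup.closure_induction with
    | mem g hg =>
      obtain ⟨i, hi, hgi⟩ := hg
      intro u
      rw [hgi u]
      have : u - (u - coroot i u • b i) = coroot i u • b i := by abel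
      rw [this]
      exact Submodule.smul_mem _ _ (Submodule.subset_span ⟨i, by simpa using hi, rfl⟩)
    | one => intro u; simp
    | mul g h hg hh ihg ihh =>
      intro u
      have : u - (g * h) u = (u - h u) + (h u - g (h u)) := by
        have : (g * h) u = g (h u) := rfl
        rw [this]; abel
      rw [this]
      exact add_mem (ihh u) (ihg (h u))
    | inv g hg ihg =>
      intro u
      have h2 := ihg (g⁻¹ u)
      have h3 : g ((g⁻¹ : V ≃ₗ[ℚ] V) u) = u := by
        have h4 : (g * g⁻¹ : V ≃ₗ[ℚ] V) u = (1 : V ≃ₗ[ℚ] V) u := by rw [mul_inv_cancel]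
        exact h4
      rw [h3] at h2
      have : u - (g⁻¹ : V ≃ₗ[ℚ] V) u = -((g⁻¹ : V ≃ₗ[ℚ] V) u - u) := by abel
      rw [this]
      exact neg_mem h2
  -- x j kills M for j ∈ J
  have hxM : ∀ j ∈ J, ∀ u ∈ M, x j u = 0 := by
    intro j hj u hu
    have : M ≤ LinearMap.ker (x j) := by
      rw [hM, Submodule.span_le]
      rintro _ ⟨i, hi, rfl⟩
      have hij : i ≠ j := by
        rintro rfl
        exact (Finset.disjoint_left.1 hdisj (by simpa using hi)) hj
      simp [LinearMap.mem_ker, hx, hij]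
    exact this hu
  -- the invariant positive definite form
  set P : V →ₗ[ℚ] V →ₗ[ℚ] ℚ := LinearMap.mk₂ ℚ
    (fun y z => ∑ w ∈ F, ∑ k, b.repr (w y) k * b.repr (w z) k)
    (by intro m₁ m₂ n; simp [map_add, add_mul, Finset.sum_add_distrib])
    (by intro c m n; simp [map_smul, smul_eq_mul, Finset.mul_sum, mul_assoc, mul_left_comm])
    (by intro m n₁ n₂; simp [map_add, mul_add, Finset.sum_add_distrib])
    (by intro c m n; simp [map_smul, smul_eq_mul, Finset.mul_sum, mul_assoc, mul_left_comm]) with hP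
  have hPapp : ∀ y z : V, P y z = ∑ w ∈ F, ∑ k, b.repr (w y) k * b.repr (w z) k := by
    intro y z; rfl
  have hPsymm : ∀ y z : V, P y z = P z y := by
    intro y z; rw [hPapp, hPapp]
    congr 1; ext w; congr 1; ext k; ring
  -- invariance
  have hPinv : ∀ g ∈ W, ∀ y z : V, P (g y) (g z) = P y z := by
    intro g hg y z
    rw [hPapp, hPapp]
    refine Finset.sum_nbij' (fun w => w * g) (fun w => w * g⁻¹) ?_ ?_ ?_ ?_ ?_
    · intro a ha; exact (hmemF _).2 (W.mul_mem ((hmemF _).1 ha) hg)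
    · intro a ha; exact (hmemF _).2 (W.mul_mem ((hmemF _).1 ha) (W.inv_mem hg))
    · intro a ha; simp [mul_assoc]
    · intro a ha; simp [mul_assoc]
    · intro a ha; rfl
  -- positive definiteness
  have hPdef : ∀ u : V, P u u = 0 → u = 0 := by
    intro u hu
    rw [hPapp] at hu
    have hnn : ∀ w ∈ F, 0 ≤ ∑ k, b.repr (w u) k * b.repr (w u) k := by
      intro w _
      exact Finset.sum_nonneg fun k _ => mul_self_nonneg _
    have h1 : ∑ k, b.repr ((1 : V ≃ₗ[ℚ] V) u) k * b.repr ((1 : V ≃ₗ[ℚ] V) u) k = 0 :=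
      (Finset.sum_eq_zero_iff_of_nonneg hnn).1 hu 1 h1F
    have h2 : ∀ k, b.repr u k = 0 := by
      intro k
      have h3 : ∀ k' ∈ (Finset.univ : Finset (Fin r)),
          0 ≤ b.repr ((1 : V ≃ₗ[ℚ] V) u) k' * b.repr ((1 : V ≃ₗ[ℚ] V) u) k' :=
        fun k' _ => mul_self_nonneg _
      have := (Finset.sum_eq_zero_iff_of_nonneg h3).1 h1 k (Finset.mem_univ k)
      have := mul_self_eq_zero.1 this
      simpa using this
    have : b.repr u = 0 := by ext k; simpa using h2 k
    exact (Module.Basis.forall_coord_eq_zero_iff b).1 (fun k => h2 k)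
  have hbne : ∀ i : Fin r, b i ≠ 0 := by
    intro i h
    have := hdiag i
    rw [h] at this
    simp at this
    -- contradiction: 0 = 2
  -- key reflection identity for i ∈ I
  have hkey : ∀ i ∈ I, ∀ z : V, 2 * P (b i) z = coroot i z * P (b i) (b i) := by
    intro i hi z
    obtain ⟨g, hgW, hgu⟩ := hrefl i hi
    have h1 := hPinv g hgW (b i) z
    have h2 : g (b i) = -(b i) := by
      rw [hgu, hdiag i]
      module
    have h3 : g z = z - coroot i z • b i := hgu z
    rw [h2, h3] at h1
    have h4 : P (-(b i)) (z - coroot i z • b i)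
        = -(P (b i) z) + coroot i z * P (b i) (b i) := by
      simp [map_sub, map_neg, map_smul, smul_eq_mul]
    rw [h4] at h1
    linarith [h1]
  -- set up A and the sum S
  set S : V := ∑ w ∈ F, w lam with hS
  set A : V := (F.card : ℚ)⁻¹ • S with hA
  -- S is fixed by every g ∈ W
  have hSfix : ∀ g ∈ W, g S = S := by
    intro g hg
    rw [hS, map_sum]
    refine Finset.sum_nbij' (fun w => g * w) (fun w => g⁻¹ * w) ?_ ?_ ?_ ?_ ?_
    · intro a ha; exact (hmemF _).2 (W.mul_mem hg ((hmemF _).1 ha))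
    · intro a ha; exact (hmemF _).2 (W.mul_mem (W.inv_mem hg) ((hmemF _).1 ha))
    · intro a ha; simp [← mul_assoc]
    · intro a ha; simp [← mul_assoc]
    · intro a ha; rfl
  -- coroot i A = 0 for i ∈ I
  have hcorA : ∀ i ∈ I, coroot i A = 0 := by
    intro i hi
    obtain ⟨g, hgW, hgu⟩ := hrefl i hi
    have h1 : g S = S := hSfix g hgW
    rw [hgu S] at h1
    have h2 : coroot i S • b i = 0 := by
      have : S - coroot i S • b i - S = S - S := by rw [h1]
      simpa using this.symm
    have h3 : coroot i S = 0 := by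
      rcases smul_eq_zero.1 h2 with h | h
      · exact h
      · exact absurd h (hbne i)
    rw [hA, map_smul, h3]
    simp
  -- lam - A is in M
  have hlamA : lam - A ∈ M := by
    have h1 : lam - A = (F.card : ℚ)⁻¹ • ∑ w ∈ F, (lam - w lam) := by
      rw [hA, hS, Finset.sum_sub_distrib, Finset.sum_const, smul_sub,
        ← Nat.cast_smul_eq_nsmul ℚ F.card lam, smul_smul, inv_mul_cancel₀ hcardne, one_smul]
    rw [h1]
    refine Submodule.smul_mem _ _ (Submodule.sum_mem _ fun w hw => ?_)
    exact hmove w ((hmemF w).1 hw) lam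
  -- x j (lam - A) = 0 for j ∈ J
  have hxA : ∀ j ∈ J, x j (lam - A) = 0 := fun j hj => hxM j hj _ hlamA
  -- let u = v - A, show u = 0
  set u : V := v - A with hu
  have hcoru : ∀ i ∈ I, coroot i u = 0 := by
    intro i hi
    rw [hu, map_sub, hv1 i hi, hcorA i hi, sub_zero]
  have hxu : ∀ j ∈ J, x j u = 0 := by
    intro j hj
    have : u = (lam - A) - (lam - v) := by rw [hu]; abel
    rw [this, map_sub, hxA j hj, hv2 j hj, sub_zero]
  -- coordinates of u on J vanish
  have hxcoord : ∀ (z : V) (j : Fin r), x j z = b.repr z j := by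
    intro z j
    conv_lhs => rw [← b.sum_repr z]
    rw [map_sum]
    simp only [map_smul, hx, smul_eq_mul]
    rw [Finset.sum_congr rfl (fun i _ => by rw [mul_ite, mul_one, mul_zero])]
    simp
  have hreprJ : ∀ j ∈ J, b.repr u j = 0 := by
    intro j hj
    rw [← hxcoord u j]
    exact hxu j hj
  -- u is a combination of b i, i ∈ I
  have husum : u = ∑ i ∈ I, b.repr u i • b i := by
    have h2 : ∑ j ∈ J, b.repr u j • b j = 0 :=
      Finset.sum_eq_zero fun j hj => by rw [hreprJ j hj, zero_smul]
    calc u = ∑ i : Fin r, b.repr u i • b i := (b.sum_repr u).symm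
      _ = ∑ i ∈ I ∪ J, b.repr u i • b i := by rw [hcover]
      _ = (∑ i ∈ I, b.repr u i • b i) + ∑ j ∈ J, b.repr u j • b j := Finset.sum_union hdisj
      _ = ∑ i ∈ I, b.repr u i • b i := by rw [h2, add_zero]
  -- P u u = 0
  have hPuu : P u u = 0 := by
    have h1 : P u u = ∑ i ∈ I, b.repr u i * P (b i) u := by
      have h0 : P u u = P (∑ i ∈ I, b.repr u i • b i) u := congrArg (fun z => P z u) husum
      rw [h0, map_sum, LinearMap.sum_apply]
      exact Finset.sum_congr rfl fun i _ => by rw [map_smul, LinearMap.smul_apply, smul_eq_mul]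
    rw [h1]
    refine Finset.sum_eq_zero fun i hi => ?_
    have h2 := hkey i hi u
    rw [hcoru i hi, zero_mul] at h2
    have : P (b i) u = 0 := by linarith
    rw [this, mul_zero]
  have hu0 : u = 0 := hPdef u hPuu
  have hvA : v = A := by
    rw [hu, sub_eq_zero] at hu0
    exact hu0
  rw [hvA, hA]
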